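/- arXiv:2506.02410 — 2 statements merged into one kernel-verified Lean document; each statement's English description precedes it below -/
import Mathlib

section
/- Let X and X̃ be n×d real matrices that differ only in their first rows x₁ and x̃₁, with the remaining rows Y identical. Then the ℓ₁-distance between the ordered eigenvalue vectors of (1/n)XᵀX and (1/n)X̃ᵀX̃ is at most (1/n)x₁ᵀx₁ + (1/n)x̃₁ᵀx̃₁. -/
open Matrix

/-- Eigenvalues of a Hermitian matrix sorted in decreasing order. -/
noncomputable def sortedEigs {d : ℕ} {A : Matrix (Fin d) (Fin d) ℝ}
    (hA : A.IsHermitian) : Fin d → ℝ :=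
  fun i => hA.eigenvalues (Tuple.sort hA.eigenvalues i.rev)

namespace StmtAux

variable {d : ℕ}

/-- Extension by zero of a vector supported on a finset. -/
noncomputable def extL (S : Finset (Fin d)) : (↥S → ℝ) →ₗ[ℝ] (Fin d → ℝ) where
  toFun c i := if h : i ∈ S then c ⟨i, h⟩ else 0
  map_add' c c' := by funext i; by_cases h : i ∈ S <;> simp [h]
  map_smul' r c := by funext i; by_cases h : i ∈ S <;> simp [h]

lemma extL_mem {S : Finset (Fin d)} {c : ↥S → ℝ} {i : Fin d} (h : i ∉ S) :
    extL S c i = 0 := by simp [extL, h]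

lemma extL_eq_zero {S : Finset (Fin d)} {c : ↥S → ℝ} (h : extL S c = 0) : c = 0 := by
  funext i
  have := congrFun h i
  simpa [extL, i.2] using this

/-- Rayleigh quotient of `A` at `U *ᵥ c` where `U` is the eigenvector unitary. -/
lemma rayleigh {A : Matrix (Fin d) (Fin d) ℝ} (hA : A.IsHermitian) (c : Fin d → ℝ) :
    ((hA.eigenvectorUnitary : Matrix (Fin d) (Fin d) ℝ) *ᵥ c) ⬝ᵥ
      (A *ᵥ ((hA.eigenvectorUnitary : Matrix (Fin d) (Fin d) ℝ) *ᵥ c)) =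
      ∑ i, hA.eigenvalues i * (c i)^2 := by
  set U : Matrix (Fin d) (Fin d) ℝ := (hA.eigenvectorUnitary : Matrix (Fin d) (Fin d) ℝ)
  have hU : star U * U = 1 := Unitary.coe_star_mul_self hA.eigenvectorUnitary
  have hAU : A * U = U * diagonal hA.eigenvalues := by
    conv_lhs => rw [hA.spectral_theorem, Unitary.conjStarAlgAut_apply]
    rw [mul_assoc, mul_assoc, hU, mul_one]
    simp
    rfl
  have h1 : A *ᵥ (U *ᵥ c) = U *ᵥ (diagonal hA.eigenvalues *ᵥ c) := by
    rw [mulVec_mulVec, mulVec_mulVec, hAU]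
  rw [h1]
  have h2 : ∀ a b : Fin d → ℝ, (U *ᵥ a) ⬝ᵥ (U *ᵥ b) = a ⬝ᵥ b := by
    intro a b
    rw [dotProduct_mulVec, vecMul_mulVec]
    have : Uᵀ * U = 1 := by
      have := hU
      rwa [star_eq_conjTranspose, conjTranspose_eq_transpose_of_trivial] at this
    rw [show U.transpose * U = 1 from this]
    simp
  rw [h2]
  simp [dotProduct, mulVec_diagonal]
  exact Finset.sum_congr rfl fun i _ => by ring

lemma norm_sq {A : Matrix (Fin d) (Fin d) ℝ} (hA : A.IsHermitian) (c : Fin d → ℝ) :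
    ((hA.eigenvectorUnitary : Matrix (Fin d) (Fin d) ℝ) *ᵥ c) ⬝ᵥ
      ((hA.eigenvectorUnitary : Matrix (Fin d) (Fin d) ℝ) *ᵥ c) = ∑ i, (c i)^2 := by
  set U : Matrix (Fin d) (Fin d) ℝ := (hA.eigenvectorUnitary : Matrix (Fin d) (Fin d) ℝ)
  have hU : star U * U = 1 := Unitary.coe_star_mul_self hA.eigenvectorUnitary
  rw [dotProduct_mulVec, vecMul_mulVec]
  have : Uᵀ * U = 1 := by
    rwa [star_eq_conjTranspose, conjTranspose_eq_transpose_of_trivial] at hU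
  rw [this]
  simp [dotProduct]
  exact Finset.sum_congr rfl fun i _ => by ring

lemma mulVec_inj {A : Matrix (Fin d) (Fin d) ℝ} (hA : A.IsHermitian) {c : Fin d → ℝ}
    (h : (hA.eigenvectorUnitary : Matrix (Fin d) (Fin d) ℝ) *ᵥ c = 0) : c = 0 := by
  set U : Matrix (Fin d) (Fin d) ℝ := (hA.eigenvectorUnitary : Matrix (Fin d) (Fin d) ℝ)
  have hU : star U * U = 1 := Unitary.coe_star_mul_self hA.eigenvectorUnitary
  have : (star U * U) *ᵥ c = star U *ᵥ (U *ᵥ c) := by rw [← mulVec_mulVec]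
  rw [hU, h] at this
  simpa using this

/-- Weyl-type monotonicity: if the quadratic form of `A` dominates that of `B`,
then each sorted eigenvalue of `A` dominates that of `B`. -/
theorem weyl {A B : Matrix (Fin d) (Fin d) ℝ} (hA : A.IsHermitian) (hB : B.IsHermitian)
    (h : ∀ x : Fin d → ℝ, x ⬝ᵥ (B *ᵥ x) ≤ x ⬝ᵥ (A *ᵥ x)) (k : Fin d) :
    sortedEigs hB k ≤ sortedEigs hA k := by
  set σA := Tuple.sort hA.eigenvalues
  set σB := Tuple.sort hB.eigenvalues
  set SB : Finset (Fin d) := (Finset.Ici k.rev).image σB with hSB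
  set SA : Finset (Fin d) := (Finset.Iic k.rev).image σA with hSA
  have hcardB : SB.card = d - k.rev := by
    rw [hSB, Finset.card_image_of_injective _ σB.injective, Fin.card_Ici]
  have hcardA : SA.card = k.rev + 1 := by
    rw [hSA, Finset.card_image_of_injective _ σA.injective, Fin.card_Iic]
  set UB : Matrix (Fin d) (Fin d) ℝ := (hB.eigenvectorUnitary : Matrix (Fin d) (Fin d) ℝ)
  set UA : Matrix (Fin d) (Fin d) ℝ := (hA.eigenvectorUnitary : Matrix (Fin d) (Fin d) ℝ)
  set φ : ((↥SB → ℝ) × (↥SA → ℝ)) →ₗ[ℝ] (Fin d → ℝ) :=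
    (UB.mulVecLin.comp (extL SB)).coprod (-(UA.mulVecLin.comp (extL SA))) with hφ
  have hker : LinearMap.ker φ ≠ ⊥ := by
    apply LinearMap.ker_ne_bot_of_finrank_lt
    rw [Module.finrank_prod]
    simp only [Module.finrank_pi, Fintype.card_coe]
    rw [hcardA, hcardB, Fintype.card_fin]
    have hk : (k : ℕ) < d := k.2
    have hr := Fin.val_rev k
    omega
  obtain ⟨p, hp, hpne⟩ := Submodule.exists_mem_ne_zero_of_ne_bot hker
  set cB : Fin d → ℝ := extL SB p.1 with hcB
  set cA : Fin d → ℝ := extL SA p.2 with hcA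
  have hφp : UB *ᵥ cB = UA *ᵥ cA := by
    have h2 := (LinearMap.mem_ker).mp hp
    rw [hφ] at h2
    simp only [LinearMap.coprod_apply, LinearMap.neg_apply, LinearMap.comp_apply,
      mulVecLin_apply] at h2
    rw [← hcB, ← hcA] at h2
    rwa [add_neg_eq_zero] at h2
  set x : Fin d → ℝ := UB *ᵥ cB with hx
  have hxA : x = UA *ᵥ cA := hφp
  have hxne : x ≠ 0 := by
    intro hx0
    have h1 : cB = 0 := mulVec_inj hB (hx ▸ hx0)
    have h2 : cA = 0 := mulVec_inj hA (by rw [← hxA]; exact hx0)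
    have hp1 : p.1 = 0 := extL_eq_zero h1
    have hp2 : p.2 = 0 := extL_eq_zero h2
    exact hpne (Prod.ext hp1 hp2)
  set s : ℝ := x ⬝ᵥ x with hs
  have hspos : 0 < s := by
    rcases lt_or_eq_of_le (Finset.sum_nonneg (fun i _ => mul_self_nonneg (x i))) with h1 | h1
    · exact h1
    · exact absurd (dotProduct_self_eq_zero.mp h1.symm) hxne
  have hsB : s = ∑ i, (cB i)^2 := by rw [hs, hx]; exact norm_sq hB cB
  have hsA : s = ∑ i, (cA i)^2 := by rw [hs, hxA]; exact norm_sq hA cA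
  have hBbound : sortedEigs hB k * s ≤ x ⬝ᵥ (B *ᵥ x) := by
    rw [hx, rayleigh hB cB, hsB, Finset.mul_sum]
    apply Finset.sum_le_sum
    intro i _
    by_cases hi : i ∈ SB
    · apply mul_le_mul_of_nonneg_right _ (sq_nonneg (cB i))
      obtain ⟨j, hj, rfl⟩ := Finset.mem_image.mp hi
      exact Tuple.monotone_sort hB.eigenvalues (Finset.mem_Ici.mp hj)
    · rw [hcB, extL_mem hi]
      simp
  have hAbound : x ⬝ᵥ (A *ᵥ x) ≤ sortedEigs hA k * s := by
    rw [hxA, rayleigh hA cA, hsA, Finset.mul_sum]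
    apply Finset.sum_le_sum
    intro i _
    by_cases hi : i ∈ SA
    · apply mul_le_mul_of_nonneg_right _ (sq_nonneg (cA i))
      obtain ⟨j, hj, rfl⟩ := Finset.mem_image.mp hi
      exact Tuple.monotone_sort hA.eigenvalues (Finset.mem_Iic.mp hj)
    · rw [hcA, extL_mem hi]
      simp
  have := hBbound.trans ((h x).trans hAbound)
  exact le_of_mul_le_mul_right this hspos

/-- The sum of sorted eigenvalues is the trace. -/
lemma sum_sortedEigs {A : Matrix (Fin d) (Fin d) ℝ} (hA : A.IsHermitian) :
    ∑ k, sortedEigs hA k = A.trace := by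
  have h1 : ∑ k, sortedEigs hA k = ∑ i, hA.eigenvalues i := by
    exact Equiv.sum_comp ((Fin.revPerm).trans (Tuple.sort hA.eigenvalues)) hA.eigenvalues
  rw [h1]
  set U : Matrix (Fin d) (Fin d) ℝ := (hA.eigenvectorUnitary : Matrix (Fin d) (Fin d) ℝ)
  have hU : star U * U = 1 := Unitary.coe_star_mul_self hA.eigenvectorUnitary
  have hD : A = U * diagonal hA.eigenvalues * star U := by
    conv_lhs => rw [hA.spectral_theorem]
    simp
    rfl
  have h2 : A.trace = (U * diagonal hA.eigenvalues * star U).trace := congrArg Matrix.trace hD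
  rw [h2, trace_mul_comm, ← mul_assoc, hU, one_mul, trace_diagonal]

end StmtAux

/-- If X and X̃ differ only in their first rows, the ℓ₁-distance between the ordered
eigenvalue vectors of (1/n)XᵀX and (1/n)X̃ᵀX̃ is at most (1/n)x₁ᵀx₁ + (1/n)x̃₁ᵀx̃₁. -/
theorem stmt1 {m d : ℕ}
    (X Xt : Matrix (Fin (m + 1)) (Fin d) ℝ) (Y : Matrix (Fin m) (Fin d) ℝ)
    (x₁ xt₁ : Fin d → ℝ)
    (h0 : X 0 = x₁) (h0' : Xt 0 = xt₁)
    (hs : ∀ i : Fin m, X i.succ = Y i) (hs' : ∀ i : Fin m, Xt i.succ = Y i)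
    (hX : ((1 / ((m : ℝ) + 1)) • (Xᵀ * X)).IsHermitian)
    (hXt : ((1 / ((m : ℝ) + 1)) • (Xtᵀ * Xt)).IsHermitian) :
    ∑ j, |sortedEigs hX j - sortedEigs hXt j| ≤
      (1 / ((m : ℝ) + 1)) * (∑ i, x₁ i * x₁ i)
        + (1 / ((m : ℝ) + 1)) * (∑ i, xt₁ i * xt₁ i) := by
  set c : ℝ := 1 / ((m : ℝ) + 1) with hc
  have hcpos : 0 < c := by
    have h : (0:ℝ) < 1 / ((m : ℝ) + 1) := one_div_pos.mpr (Nat.cast_add_one_pos m)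
    rw [hc]; exact h
  set B : Matrix (Fin d) (Fin d) ℝ := c • (Yᵀ * Y) with hBdef
  have hYY : (Yᵀ * Y).IsHermitian := by
    simpa [conjTranspose_eq_transpose_of_trivial] using isHermitian_conjTranspose_mul_self Y
  have hB : B.IsHermitian := by
    show Bᴴ = B
    rw [hBdef, conjTranspose_smul, hYY, star_trivial]
  -- decompositions
  have hdecX : Xᵀ * X = Yᵀ * Y + vecMulVec x₁ x₁ := by
    ext j l
    simp only [mul_apply, transpose_apply, Matrix.add_apply, vecMulVec_apply]
    rw [Fin.sum_univ_succ]
    simp only [h0, fun i => congrFun (hs i)]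
    ring
  have hdecXt : Xtᵀ * Xt = Yᵀ * Y + vecMulVec xt₁ xt₁ := by
    ext j l
    simp only [mul_apply, transpose_apply, Matrix.add_apply, vecMulVec_apply]
    rw [Fin.sum_univ_succ]
    simp only [h0', fun i => congrFun (hs' i)]
    ring
  -- quadratic form domination
  have hrank1 : ∀ (v w : Fin d → ℝ), 0 ≤ w ⬝ᵥ ((c • vecMulVec v v) *ᵥ w) := by
    intro v w
    have h1 : vecMulVec v v *ᵥ w = (v ⬝ᵥ w) • v := by
      funext i
      simp only [mulVec, dotProduct, vecMulVec_apply, Pi.smul_apply, smul_eq_mul,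
        Finset.sum_mul, Finset.mul_sum]
      exact Finset.sum_congr rfl fun j _ => by ring
    rw [smul_mulVec, dotProduct_smul, h1, dotProduct_smul]
    have : w ⬝ᵥ v = v ⬝ᵥ w := dotProduct_comm w v
    rw [smul_eq_mul, smul_eq_mul, this]
    exact mul_nonneg hcpos.le (mul_self_nonneg _)
  have hqX : ∀ x : Fin d → ℝ, x ⬝ᵥ (B *ᵥ x) ≤ x ⬝ᵥ ((c • (Xᵀ * X)) *ᵥ x) := by
    intro x
    have : c • (Xᵀ * X) = B + c • vecMulVec x₁ x₁ := by rw [hdecX, smul_add, hBdef]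
    rw [this, add_mulVec, dotProduct_add]
    have := hrank1 x₁ x
    linarith
  have hqXt : ∀ x : Fin d → ℝ, x ⬝ᵥ (B *ᵥ x) ≤ x ⬝ᵥ ((c • (Xtᵀ * Xt)) *ᵥ x) := by
    intro x
    have : c • (Xtᵀ * Xt) = B + c • vecMulVec xt₁ xt₁ := by rw [hdecXt, smul_add, hBdef]
    rw [this, add_mulVec, dotProduct_add]
    have := hrank1 xt₁ x
    linarith
  have hmonX : ∀ k, sortedEigs hB k ≤ sortedEigs hX k := StmtAux.weyl hX hB hqX
  have hmonXt : ∀ k, sortedEigs hB k ≤ sortedEigs hXt k := StmtAux.weyl hXt hB hqXt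
  -- traces
  have htrX : ∑ k, sortedEigs hX k = c * (Yᵀ * Y).trace + c * ∑ i, x₁ i * x₁ i := by
    rw [StmtAux.sum_sortedEigs hX, trace_smul, smul_eq_mul, hdecX, trace_add]
    have : (vecMulVec x₁ x₁).trace = ∑ i, x₁ i * x₁ i := by
      simp [trace, diag, vecMulVec_apply]
    rw [this]
    ring
  have htrXt : ∑ k, sortedEigs hXt k = c * (Yᵀ * Y).trace + c * ∑ i, xt₁ i * xt₁ i := by
    rw [StmtAux.sum_sortedEigs hXt, trace_smul, smul_eq_mul, hdecXt, trace_add]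
    have : (vecMulVec xt₁ xt₁).trace = ∑ i, xt₁ i * xt₁ i := by
      simp [trace, diag, vecMulVec_apply]
    rw [this]
    ring
  have htrB : ∑ k, sortedEigs hB k = c * (Yᵀ * Y).trace := by
    rw [StmtAux.sum_sortedEigs hB, hBdef, trace_smul, smul_eq_mul]
  -- assemble
  have hstep : ∑ j, |sortedEigs hX j - sortedEigs hXt j| ≤
      ∑ j, ((sortedEigs hX j - sortedEigs hB j) + (sortedEigs hXt j - sortedEigs hB j)) := by
    apply Finset.sum_le_sum
    intro j _
    have h1 := hmonX j
    have h2 := hmonXt j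
    rw [abs_le]
    constructor <;> linarith
  calc ∑ j, |sortedEigs hX j - sortedEigs hXt j|
      ≤ ∑ j, ((sortedEigs hX j - sortedEigs hB j) + (sortedEigs hXt j - sortedEigs hB j)) :=
        hstep
    _ = (∑ j, sortedEigs hX j - ∑ j, sortedEigs hB j)
        + (∑ j, sortedEigs hXt j - ∑ j, sortedEigs hB j) := by
        rw [Finset.sum_add_distrib, Finset.sum_sub_distrib, Finset.sum_sub_distrib]
    _ = c * (∑ i, x₁ i * x₁ i) + c * (∑ i, xt₁ i * xt₁ i) := by
        rw [htrX, htrXt, htrB]; ring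
end

section
/- Let f : ℝ^{n×d} → ℝ^s have ℓ₁-sensitivity Δ₁f = sup over neighboring datasets of ‖f(X) - f(X̃)‖₁ < ∞. The Laplace mechanism M(X) = f(X) + (ℓ₁,…,ℓ_s), where the ℓᵢ are i.i.d. centered Laplace with scale Δ₁f/ε, is ε-differentially private. -/
open MeasureTheory

/-- Two datasets are neighboring if they differ in exactly one row. -/
def Neighboring {n d : ℕ} (X Xt : Fin n → Fin d → ℝ) : Prop :=
  ∃ i, X i ≠ Xt i ∧ ∀ j, j ≠ i → X j = Xt j

/-- The centered Laplace distribution with scale b, with density (1/(2b)) e^{-|x|/b}. -/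
noncomputable def laplaceMeasure (b : ℝ) : Measure ℝ :=
  volume.withDensity fun x => ENNReal.ofReal ((1 / (2 * b)) * Real.exp (-|x| / b))

open scoped ENNReal

theorem lint_pi_prod : ∀ {m : ℕ} (μ : Fin m → Measure ℝ), (∀ i, SigmaFinite (μ i)) →
    ∀ (g : Fin m → ℝ → ℝ≥0∞), (∀ i, Measurable (g i)) →
    ∫⁻ x, ∏ i, g i (x i) ∂Measure.pi μ = ∏ i, ∫⁻ y, g i y ∂μ i := by
  intro m
  induction m with
  | zero => intro μ _ g hg; simp
  | succ n ih =>
    intro μ hsf g hg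
    haveI := hsf
    have hmeas : Measurable (fun y : ℝ × (Fin n → ℝ) =>
        g 0 y.1 * ∏ j, g (Fin.succAbove 0 j) (y.2 j)) := by
      apply Measurable.mul ((hg 0).comp measurable_fst)
      apply Finset.measurable_prod
      intro j _
      exact (hg _).comp ((measurable_pi_apply j).comp measurable_snd)
    have h := (measurePreserving_piFinSuccAbove μ 0).lintegral_comp hmeas
    have heq : ∀ x : Fin (n+1) → ℝ,
        (fun y : ℝ × (Fin n → ℝ) => g 0 y.1 * ∏ j, g (Fin.succAbove 0 j) (y.2 j))
          ((MeasurableEquiv.piFinSuccAbove (fun _ => ℝ) 0) x) = ∏ i, g i (x i) := by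
      intro x
      simp [MeasurableEquiv.piFinSuccAbove,
        Fin.prod_univ_succAbove (fun i => g i (x i)) 0, Fin.tail]
    calc ∫⁻ x, ∏ i, g i (x i) ∂Measure.pi μ
        = ∫⁻ y, g 0 y.1 * ∏ j, g (Fin.succAbove 0 j) (y.2 j)
            ∂((μ 0).prod (Measure.pi fun j => μ (Fin.succAbove 0 j))) := by
          rw [← h]; exact lintegral_congr fun x => (heq x).symm
      _ = (∫⁻ y, g 0 y ∂μ 0) * ∏ j, ∫⁻ y, g (Fin.succAbove 0 j) y ∂μ (Fin.succAbove 0 j) := by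
          have h2 : AEMeasurable (fun t : Fin n → ℝ => ∏ j, g (Fin.succAbove 0 j) (t j))
              (Measure.pi fun j => μ (Fin.succAbove 0 j)) :=
            (Finset.measurable_prod _ fun j _ =>
              (hg _).comp (measurable_pi_apply j)).aemeasurable
          exact (lintegral_prod_mul ((hg 0).aemeasurable) h2).trans
            (by rw [ih _ (fun j => hsf _) _ (fun j => hg _)])
      _ = ∏ i, ∫⁻ y, g i y ∂μ i :=
          (Fin.prod_univ_succAbove (fun i => ∫⁻ y, g i y ∂μ i) 0).symm

lemma laplaceDens_measurable (b : ℝ) :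
    Measurable fun x : ℝ => ENNReal.ofReal ((1 / (2 * b)) * Real.exp (-|x| / b)) :=
  (continuous_const.mul (Real.continuous_exp.comp
    (continuous_abs.neg.div_const b))).measurable.ennreal_ofReal

lemma pi_laplace (b : ℝ) (s : ℕ) :
    Measure.pi (fun _ : Fin s => laplaceMeasure b) =
      (volume : Measure (Fin s → ℝ)).withDensity
        (fun x => ∏ i, ENNReal.ofReal ((1 / (2 * b)) * Real.exp (-|x i| / b))) := by
  have hsf : SigmaFinite (laplaceMeasure b) := by
    unfold laplaceMeasure; infer_instance
  set D : ℝ → ℝ≥0∞ := fun x => ENNReal.ofReal ((1 / (2 * b)) * Real.exp (-|x| / b)) with hD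
  have hDm : Measurable D := laplaceDens_measurable b
  refine @Measure.pi_eq (Fin s) (fun _ => ℝ) _ _ (fun _ => laplaceMeasure b)
    (fun _ => hsf) _ (fun t ht => ?_)
  rw [withDensity_apply _ (MeasurableSet.univ_pi ht),
    ← lintegral_indicator (MeasurableSet.univ_pi ht) _]
  have hind : ∀ x : Fin s → ℝ,
      (Set.pi Set.univ t).indicator (fun x => ∏ i, D (x i)) x
        = ∏ i, (t i).indicator D (x i) := by
    intro x
    by_cases hx : x ∈ Set.pi Set.univ t
    · rw [Set.indicator_of_mem hx]
      exact Finset.prod_congr rfl fun i _ =>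
        (Set.indicator_of_mem (hx i (Set.mem_univ i)) D).symm
    · rw [Set.indicator_of_notMem hx]
      obtain ⟨i, -, hi⟩ : ∃ i, i ∈ Set.univ ∧ x i ∉ t i := by
        by_contra hcon
        push_neg at hcon
        exact hx fun i hi => hcon i hi
      exact (Finset.prod_eq_zero (Finset.mem_univ i)
        (Set.indicator_of_notMem hi D)).symm
  rw [lintegral_congr hind]
  have : (volume : Measure (Fin s → ℝ)) = Measure.pi fun _ => volume := volume_pi
  rw [this, lint_pi_prod _ (fun _ => inferInstance) _ (fun i => hDm.indicator (ht i))]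
  exact Finset.prod_congr rfl fun i _ => by
    rw [lintegral_indicator (ht i) _]
    rw [laplaceMeasure, withDensity_apply _ (ht i)]

/-- The Laplace mechanism M(X) = f(X) + (ℓ₁,…,ℓ_s), with i.i.d. centered Laplace noise of
scale Δ₁f/ε, is ε-differentially private. -/
theorem stmt8 {n d s : ℕ} (f : (Fin n → Fin d → ℝ) → (Fin s → ℝ))
    (ε Δ : ℝ) (hε : 0 < ε) (hΔ : 0 < Δ)
    (hsens : ∀ X Xt, Neighboring X Xt → ∑ i, |f X i - f Xt i| ≤ Δ)
    (M : (Fin n → Fin d → ℝ) → Measure (Fin s → ℝ))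
    (hM : ∀ X, M X = (Measure.pi fun _ : Fin s => laplaceMeasure (Δ / ε)).map
      (fun ℓ => f X + ℓ)) :
    ∀ X Xt, Neighboring X Xt → ∀ S : Set (Fin s → ℝ), MeasurableSet S →
      M X S ≤ ENNReal.ofReal (Real.exp ε) * M Xt S := by
  intro X Xt hN S hS
  set b : ℝ := Δ / ε with hb
  have hbpos : 0 < b := div_pos hΔ hε
  set dd : ℝ → ℝ := fun x => (1 / (2 * b)) * Real.exp (-|x| / b) with hdd
  have hd0 : ∀ x, 0 ≤ dd x := fun x =>
    mul_nonneg (by positivity) (Real.exp_nonneg _)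
  set D : ℝ → ℝ≥0∞ := fun x => ENNReal.ofReal (dd x) with hDdef
  have hDm : Measurable D := laplaceDens_measurable b
  set G : (Fin s → ℝ) → ℝ≥0∞ := fun x => ∏ i, D (x i) with hG
  have hGm : Measurable G :=
    Finset.measurable_prod _ fun i _ => hDm.comp (measurable_pi_apply i)
  -- compute M v S as an integral
  have hMv : ∀ v : Fin s → ℝ,
      ((Measure.pi fun _ : Fin s => laplaceMeasure b).map (fun ℓ => v + ℓ)) S
        = ∫⁻ y, S.indicator (fun y => G (y - v)) y := by
    intro v
    have hadd : Measurable (fun ℓ : Fin s → ℝ => v + ℓ) := measurable_const_add v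
    rw [Measure.map_apply hadd hS, pi_laplace b s,
      withDensity_apply _ (hadd hS), ← lintegral_indicator (hadd hS) _]
    have hptw : ∀ x : Fin s → ℝ,
        ((fun ℓ => v + ℓ) ⁻¹' S).indicator G x
          = S.indicator (fun y => G (y - v)) (v + x) := by
      intro x
      by_cases hx : v + x ∈ S
      · rw [Set.indicator_of_mem hx, Set.indicator_of_mem (by exact hx)]
        simp
      · rw [Set.indicator_of_notMem hx, Set.indicator_of_notMem (by exact hx)]
    exact (lintegral_congr hptw).trans
      (lintegral_add_left_eq_self (S.indicator fun y => G (y - v)) v)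
  -- pointwise density inequality
  have hkey : ∀ y : Fin s → ℝ,
      G (y - f X) ≤ ENNReal.ofReal (Real.exp ε) * G (y - f Xt) := by
    intro y
    have hGofReal : ∀ u : Fin s → ℝ,
        G (y - u) = ENNReal.ofReal (∏ i, dd (y i - u i)) := by
      intro u
      rw [hG, ENNReal.ofReal_prod_of_nonneg (fun i _ => hd0 _)]
      exact Finset.prod_congr rfl fun i _ => by simp [hDdef]
    rw [hGofReal, hGofReal, ← ENNReal.ofReal_mul (Real.exp_nonneg ε)]
    apply ENNReal.ofReal_le_ofReal
    have hprod : ∀ u : Fin s → ℝ, ∏ i, dd (y i - u i)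
        = (1 / (2 * b)) ^ (s : ℕ) * Real.exp (∑ i, -|y i - u i| / b) := by
      intro u
      rw [Real.exp_sum]
      simp [hdd, Finset.prod_mul_distrib, Finset.prod_const, Finset.card_univ]
    rw [hprod, hprod, mul_comm (Real.exp ε), mul_assoc, ← Real.exp_add]
    apply mul_le_mul_of_nonneg_left _ (by positivity)
    apply Real.exp_le_exp.mpr
    have hsum : ∑ i, -|y i - f X i| / b - ∑ i, -|y i - f Xt i| / b ≤ ε := by
      rw [← Finset.sum_sub_distrib]
      have hle : ∀ i : Fin s, -|y i - f X i| / b - -|y i - f Xt i| / b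
          ≤ |f X i - f Xt i| / b := by
        intro i
        rw [div_sub_div_same]
        have h3 : -|y i - f X i| - -|y i - f Xt i| ≤ |f X i - f Xt i| := by
          have h1 := abs_sub_abs_le_abs_sub (y i - f Xt i) (y i - f X i)
          have h2 : (y i - f Xt i) - (y i - f X i) = f X i - f Xt i := by ring
          rw [h2] at h1
          linarith
        gcongr
      calc ∑ i, (-|y i - f X i| / b - -|y i - f Xt i| / b)
          ≤ ∑ i, |f X i - f Xt i| / b := Finset.sum_le_sum fun i _ => hle i
        _ = (∑ i, |f X i - f Xt i|) / b := by rw [Finset.sum_div]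
        _ ≤ Δ / b := by gcongr; exact hsens X Xt hN
        _ = ε := by rw [hb]; field_simp
    linarith
  -- conclude
  rw [hM X, hM Xt, hMv, hMv]
  calc ∫⁻ y, S.indicator (fun y => G (y - f X)) y
      ≤ ∫⁻ y, ENNReal.ofReal (Real.exp ε) * S.indicator (fun y => G (y - f Xt)) y := by
        apply lintegral_mono
        intro y
        by_cases hy : y ∈ S
        · simp only [Set.indicator_of_mem hy]
          exact hkey y
        · simp only [Set.indicator_of_notMem hy]
          simp
    _ = ENNReal.ofReal (Real.exp ε) * ∫⁻ y, S.indicator (fun y => G (y - f Xt)) y := by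
        exact lintegral_const_mul' _ _ ENNReal.ofReal_ne_top
end
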